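/- With 𝒯 a triangulation of a simplex Σ_n, V its vertex set, β : Σ_n → Δ(V) the barycentric coordinate map and φ : Δ(V) → Σ_n the affine projection, the image β(Σ_n) equals the union of those faces of Δ(V) spanned by vertex sets of simplices of 𝒯; in particular β(Σ_n) is a closed subset of Δ(V) and is the space (union) of a subcomplex of the face complex of Δ(V). -/

import Mathlib

/-- A triangulation of the set `P ⊆ ℝ^m`: a finite collection of (vertex sets of)
affinely independent simplices covering `P`, closed under nonempty faces, whose
pairwise intersections are common faces. -/
structure TriangulationOf {m : ℕ} (P : Set (Fin m → ℝ)) where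
  cells : Finset (Finset (Fin m → ℝ))
  nonempty_mem : ∀ T ∈ cells, T.Nonempty
  indep : ∀ T ∈ cells, AffineIndependent ℝ (fun v : {x // x ∈ T} => (v : Fin m → ℝ))
  down_closed : ∀ T ∈ cells, ∀ T' ⊆ T, T'.Nonempty → T' ∈ cells
  covers : (⋃ T ∈ cells, convexHull ℝ (T : Set (Fin m → ℝ))) = P
  inter_face : ∀ T ∈ cells, ∀ T' ∈ cells,
    convexHull ℝ (T : Set (Fin m → ℝ)) ∩ convexHull ℝ (T' : Set (Fin m → ℝ)) =
      convexHull ℝ ((T : Set (Fin m → ℝ)) ∩ (T' : Set (Fin m → ℝ)))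

private lemma rep_unique {k : ℕ} {T : Finset (Fin k → ℝ)}
    (h : AffineIndependent ℝ (fun v : {x // x ∈ T} => (v : Fin k → ℝ)))
    (w₁ w₂ : {x // x ∈ T} → ℝ)
    (h₁ : ∑ v, w₁ v = 1) (h₂ : ∑ v, w₂ v = 1)
    (he : (∑ v, w₁ v • (v : Fin k → ℝ)) = ∑ v, w₂ v • (v : Fin k → ℝ)) : w₁ = w₂ := by
  refine (affineIndependent_iff_eq_of_fintype_affineCombination_eq ℝ _).1 h w₁ w₂ h₁ h₂ ?_
  rw [affineCombination_eq_centerMass h₁, affineCombination_eq_centerMass h₂,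
    Finset.centerMass_eq_of_sum_1 _ _ h₁, Finset.centerMass_eq_of_sum_1 _ _ h₂]
  exact he

private lemma exists_weights {k : ℕ} {S T : Finset (Fin k → ℝ)} (hST : S ⊆ T)
    {σ : Fin k → ℝ} (hσ : σ ∈ convexHull ℝ (S : Set (Fin k → ℝ))) :
    ∃ w : {x // x ∈ T} → ℝ, (∀ v, 0 ≤ w v) ∧
      (∀ v : {x // x ∈ T}, (v : Fin k → ℝ) ∉ S → w v = 0) ∧
      (∑ v, w v) = 1 ∧ (∑ v, w v • (v : Fin k → ℝ)) = σ := by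
  rw [Finset.convexHull_eq] at hσ
  obtain ⟨w, hw0, hw1, hwσ⟩ := hσ
  have hTS : T ∩ S = S := Finset.inter_eq_right.2 hST
  refine ⟨fun v => if (v : Fin k → ℝ) ∈ S then w v else 0, ?_, ?_, ?_, ?_⟩
  · intro v; dsimp only; split_ifs with hv
    · exact hw0 _ hv
    · exact le_refl 0
  · intro v hv; simp [hv]
  · rw [Finset.sum_coe_sort T (fun y => if y ∈ S then w y else 0),
      Finset.sum_ite_mem, hTS, hw1]
  · rw [Finset.sum_coe_sort T (fun y => (if y ∈ S then w y else 0) • y)]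
    rw [← hwσ, Finset.centerMass_eq_of_sum_1 _ _ hw1]
    rw [← hTS, ← Finset.sum_ite_mem T S (fun y => w y • id y)]
    apply Finset.sum_congr rfl
    intro y _
    simp only [hTS]
    split_ifs with hy <;> simp

private lemma interior_not_in_face {k : ℕ} {T : Finset (Fin k → ℝ)}
    (hind : AffineIndependent ℝ (fun v : {x // x ∈ T} => (v : Fin k → ℝ)))
    {σ : Fin k → ℝ} (hσ : σ ∈ intrinsicInterior ℝ (convexHull ℝ (T : Set (Fin k → ℝ))))
    {v0 : Fin k → ℝ} (hv0 : v0 ∈ T)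
    (hS : σ ∈ convexHull ℝ ((T.erase v0 : Finset (Fin k → ℝ)) : Set (Fin k → ℝ))) : False := by
  classical
  obtain ⟨w, hw0, hwsupp, hw1, hwσ⟩ := exists_weights (Finset.erase_subset v0 T) hS
  have hwv0 : w ⟨v0, hv0⟩ = 0 := hwsupp _ (Finset.notMem_erase v0 T)
  set δ : {x // x ∈ T} → ℝ := fun v => if v = ⟨v0, hv0⟩ then (1 : ℝ) else 0 with hδ
  have hδ1 : ∑ v, δ v = 1 := by simp [hδ]
  have hδσ : (∑ v, δ v • (v : Fin k → ℝ)) = v0 := by simp [hδ]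
  by_cases hsv : σ = v0
  · have h1 := rep_unique hind w δ hw1 hδ1 (by rw [hwσ, hδσ, hsv])
    have h2 : w ⟨v0, hv0⟩ = 1 := by rw [h1]; simp [hδ]
    rw [hwv0] at h2; exact zero_ne_one h2
  · set s : Set (Fin k → ℝ) := convexHull ℝ (T : Set (Fin k → ℝ)) with hs
    rw [mem_intrinsicInterior] at hσ
    obtain ⟨x, hx, hxσ⟩ := hσ
    rw [mem_interior_iff_mem_nhds, Metric.mem_nhds_iff] at hx
    obtain ⟨ε, hε, hball⟩ := hx
    have hnorm : 0 < ‖σ - v0‖ := by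
      rw [norm_pos_iff]; intro h; exact hsv (sub_eq_zero.1 h)
    set t : ℝ := ε / (2 * ‖σ - v0‖) with ht
    have htpos : 0 < t := div_pos hε (by positivity)
    set z : Fin k → ℝ := σ + t • (σ - v0) with hz
    have hσs : σ ∈ s := convexHull_mono (by
      intro y hy
      exact Finset.mem_coe.2 (Finset.mem_of_mem_erase (Finset.mem_coe.1 hy))) hS
    have hσspan : σ ∈ affineSpan ℝ s := hxσ ▸ x.2
    have hv0span : v0 ∈ affineSpan ℝ s :=
      subset_affineSpan ℝ s (subset_convexHull ℝ _ (Finset.mem_coe.2 hv0))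
    have hzspan : z ∈ affineSpan ℝ s := by
      have := AffineSubspace.smul_vsub_vadd_mem (affineSpan ℝ s) t hσspan hv0span hσspan
      simpa [hz, vsub_eq_sub, vadd_eq_add, add_comm] using this
    have hdist : dist (⟨z, hzspan⟩ : affineSpan ℝ s) x < ε := by
      have h1 : dist (⟨z, hzspan⟩ : affineSpan ℝ s) x = dist z σ := by
        rw [Subtype.dist_eq, hxσ]
      rw [h1, dist_eq_norm]
      have h2 : z - σ = t • (σ - v0) := by rw [hz]; abel
      rw [h2, norm_smul, Real.norm_eq_abs, abs_of_pos htpos, ht]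
      rw [div_mul_eq_mul_div, mul_comm (2 : ℝ) ‖σ - v0‖, ← div_div,
        mul_div_assoc, div_self hnorm.ne', mul_one]
      exact half_lt_self hε
    have hzs : z ∈ s := hball hdist
    obtain ⟨w', hw'0, _, hw'1, hw'σ⟩ := exists_weights (Finset.Subset.refl T) hzs
    set u : {x // x ∈ T} → ℝ := fun v => (1 + t) * w v - t * δ v with hu
    have husum : ∑ v, u v = 1 := by
      simp only [hu, Finset.sum_sub_distrib, ← Finset.mul_sum, hw1, hδ1]
      ring
    have huvec : (∑ v, u v • (v : Fin k → ℝ)) = z := by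
      have h3 : ∀ v : {x // x ∈ T}, u v • (v : Fin k → ℝ)
          = (1 + t) • (w v • (v : Fin k → ℝ)) - t • (δ v • (v : Fin k → ℝ)) := by
        intro v; simp [hu, sub_smul, mul_smul]
      rw [Finset.sum_congr rfl (fun v _ => h3 v), Finset.sum_sub_distrib,
        ← Finset.smul_sum, ← Finset.smul_sum, hwσ, hδσ, hz]
      module
    have h4 := rep_unique hind u w' husum hw'1 (huvec.trans hw'σ.symm)
    have h5 : w' ⟨v0, hv0⟩ = -t := by
      rw [← h4, hu]; simp [hwv0, hδ]
    have := hw'0 ⟨v0, hv0⟩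
    rw [h5] at this
    linarith

/-- the image of the barycentric coordinate map `β` equals the union of
the faces of `Δ(V)` spanned by vertex sets of simplices of the triangulation `𝒯`;
in particular it is closed in `Δ(V)` (it is the space of a subcomplex of the face
complex of `Δ(V)`). -/
theorem stmt_6 {k : ℕ} (𝒯 : TriangulationOf (stdSimplex ℝ (Fin k)))
    (V : Finset (Fin k → ℝ))
    (hV : (V : Set (Fin k → ℝ)) = ⋃ T ∈ 𝒯.cells, (T : Set (Fin k → ℝ)))
    (β : (Fin k → ℝ) → ({x // x ∈ V} → ℝ))
    (hβ1 : ∀ σ ∈ stdSimplex ℝ (Fin k), β σ ∈ stdSimplex ℝ {x // x ∈ V})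
    (hβ2 : ∀ σ ∈ stdSimplex ℝ (Fin k), ∃ T ∈ 𝒯.cells,
      σ ∈ intrinsicInterior ℝ (convexHull ℝ (T : Set (Fin k → ℝ))) ∧
      ∀ v : {x // x ∈ V}, β σ v ≠ 0 → (v : Fin k → ℝ) ∈ T)
    (hβ3 : ∀ σ ∈ stdSimplex ℝ (Fin k),
      (∑ v : {x // x ∈ V}, β σ v • (v : Fin k → ℝ)) = σ) :
    (β '' stdSimplex ℝ (Fin k) =
      ⋃ T ∈ 𝒯.cells, {μ : {x // x ∈ V} → ℝ | μ ∈ stdSimplex ℝ {x // x ∈ V} ∧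
        ∀ v : {x // x ∈ V}, μ v ≠ 0 → (v : Fin k → ℝ) ∈ T}) ∧
    IsClosed (β '' stdSimplex ℝ (Fin k)) := by
  classical
  have hsub : ∀ T ∈ 𝒯.cells, T ⊆ V := by
    intro T hT y hy
    have : (y : Fin k → ℝ) ∈ (V : Set (Fin k → ℝ)) := by
      rw [hV]; exact Set.mem_biUnion hT hy
    exact this
  have hmain : β '' stdSimplex ℝ (Fin k) =
      ⋃ T ∈ 𝒯.cells, {μ : {x // x ∈ V} → ℝ | μ ∈ stdSimplex ℝ {x // x ∈ V} ∧
        ∀ v : {x // x ∈ V}, μ v ≠ 0 → (v : Fin k → ℝ) ∈ T} := by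
    ext μ
    simp only [Set.mem_image, Set.mem_iUnion, Set.mem_setOf_eq]
    constructor
    · rintro ⟨σ, hσ, rfl⟩
      obtain ⟨T, hT, _, hsupp⟩ := hβ2 σ hσ
      exact ⟨T, hT, hβ1 σ hσ, hsupp⟩
    · rintro ⟨T, hT, hμs, hμsupp⟩
      have hTV := hsub T hT
      set w : (Fin k → ℝ) → ℝ := fun y => if h : y ∈ V then μ ⟨y, h⟩ else 0 with hwdef
      set σ : Fin k → ℝ := ∑ v : {x // x ∈ V}, μ v • (v : Fin k → ℝ) with hσdef
      have hμw : ∀ v : {x // x ∈ V}, μ v = w v := by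
        intro v; simp [hwdef, v.2]
      have hvan : ∀ y ∈ V, y ∉ T → w y = 0 := by
        intro y hyV hyT
        simp only [hwdef]; rw [dif_pos hyV]
        by_contra h
        exact hyT (hμsupp ⟨y, hyV⟩ h)
      have hwV1 : ∑ y ∈ V, w y = 1 := by
        rw [← Finset.sum_coe_sort V w,
          Finset.sum_congr rfl (fun v (_ : v ∈ Finset.univ) => (hμw v).symm)]
        exact hμs.2
      have hwT1 : ∑ y ∈ T, w y = 1 := (Finset.sum_subset hTV hvan).trans hwV1
      have hσT : σ = ∑ y ∈ T, w y • y := by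
        rw [hσdef,
          Finset.sum_congr rfl (fun v (_ : v ∈ Finset.univ) => by rw [hμw v]),
          Finset.sum_coe_sort V (fun y => w y • y)]
        exact (Finset.sum_subset hTV (fun y hyV hyT => by rw [hvan y hyV hyT, zero_smul])).symm
      have hσhull : σ ∈ convexHull ℝ (T : Set (Fin k → ℝ)) := by
        rw [Finset.convexHull_eq]
        refine ⟨w, fun y _ => ?_, hwT1, ?_⟩
        · simp only [hwdef]
          split_ifs with hy
          · exact hμs.1 _
          · exact le_refl 0
        · rw [Finset.centerMass_eq_of_sum_1 _ _ hwT1]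
          simpa using hσT.symm
      have hσstd : σ ∈ stdSimplex ℝ (Fin k) := by
        rw [← 𝒯.covers]; exact Set.mem_biUnion hT hσhull
      obtain ⟨T', hT', hrel, hsupp'⟩ := hβ2 σ hσstd
      have hβσ := hβ3 σ hσstd
      have hT'T : T' ⊆ T := by
        intro y hy
        by_contra hyT
        have h1 : σ ∈ convexHull ℝ (T : Set (Fin k → ℝ)) ∩
            convexHull ℝ (T' : Set (Fin k → ℝ)) := ⟨hσhull, intrinsicInterior_subset hrel⟩
        rw [𝒯.inter_face T hT T' hT'] at h1
        have h2 : ((T : Set (Fin k → ℝ)) ∩ (T' : Set (Fin k → ℝ))) ⊆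
            ((T'.erase y : Finset (Fin k → ℝ)) : Set (Fin k → ℝ)) := by
          rintro z ⟨hz1, hz2⟩
          refine Finset.mem_coe.2 (Finset.mem_erase.2 ⟨?_, Finset.mem_coe.1 hz2⟩)
          rintro rfl; exact hyT hz1
        exact interior_not_in_face (𝒯.indep T' hT') hrel hy (convexHull_mono h2 h1)
      -- weights for β σ
      set wb : (Fin k → ℝ) → ℝ := fun y => if h : y ∈ V then β σ ⟨y, h⟩ else 0 with hwbdef
      have hbw : ∀ v : {x // x ∈ V}, β σ v = wb v := by
        intro v; simp [hwbdef, v.2]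
      have hbvan : ∀ y ∈ V, y ∉ T → wb y = 0 := by
        intro y hyV hyT
        simp only [hwbdef]; rw [dif_pos hyV]
        by_contra h
        exact hyT (hT'T (hsupp' ⟨y, hyV⟩ h))
      have hwbV1 : ∑ y ∈ V, wb y = 1 := by
        rw [← Finset.sum_coe_sort V wb,
          Finset.sum_congr rfl (fun v (_ : v ∈ Finset.univ) => (hbw v).symm)]
        exact (hβ1 σ hσstd).2
      have hwbT1 : ∑ y ∈ T, wb y = 1 := (Finset.sum_subset hTV hbvan).trans hwbV1
      have hσbT : σ = ∑ y ∈ T, wb y • y := by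
        conv_lhs => rw [← hβσ]
        rw [Finset.sum_congr rfl (fun v (_ : v ∈ Finset.univ) => by rw [hbw v]),
          Finset.sum_coe_sort V (fun y => wb y • y)]
        exact (Finset.sum_subset hTV (fun y hyV hyT => by rw [hbvan y hyV hyT, zero_smul])).symm
      -- uniqueness of barycentric coordinates on T
      have hrep : (fun v : {x // x ∈ T} => w (v : Fin k → ℝ)) =
          fun v : {x // x ∈ T} => wb (v : Fin k → ℝ) := by
        apply rep_unique (𝒯.indep T hT)
        · rw [Finset.sum_coe_sort T w]; exact hwT1
        · rw [Finset.sum_coe_sort T wb]; exact hwbT1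
        · rw [Finset.sum_coe_sort T (fun y => w y • y),
            Finset.sum_coe_sort T (fun y => wb y • y), ← hσT, ← hσbT]
      refine ⟨σ, hσstd, ?_⟩
      funext v
      by_cases hvT : (v : Fin k → ℝ) ∈ T
      · have h := congrFun hrep ⟨(v : Fin k → ℝ), hvT⟩
        rw [hbw v, hμw v]
        exact h.symm
      · have h1 : μ v = 0 := by by_contra h; exact hvT (hμsupp v h)
        have h2 : β σ v = 0 := by by_contra h; exact hvT (hT'T (hsupp' v h))
        rw [h1, h2]
  refine ⟨hmain, ?_⟩
  rw [hmain]
  refine Set.Finite.isClosed_biUnion 𝒯.cells.finite_toSet ?_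
  intro T _
  have heq : {μ : {x // x ∈ V} → ℝ | μ ∈ stdSimplex ℝ {x // x ∈ V} ∧
      ∀ v : {x // x ∈ V}, μ v ≠ 0 → (v : Fin k → ℝ) ∈ T}
      = stdSimplex ℝ {x // x ∈ V} ∩
        ⋂ (v : {x // x ∈ V}) (_ : (v : Fin k → ℝ) ∉ T), {μ : {x // x ∈ V} → ℝ | μ v = 0} := by
    ext μ
    simp only [Set.mem_setOf_eq, Set.mem_inter_iff, Set.mem_iInter]
    constructor
    · rintro ⟨h1, h2⟩; exact ⟨h1, fun v hv => by_contra fun h => hv (h2 v h)⟩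
    · rintro ⟨h1, h2⟩; exact ⟨h1, fun v hv => by_contra fun h => hv (h2 v h)⟩
  rw [heq]
  exact (isClosed_stdSimplex ℝ _).inter (isClosed_iInter fun v =>
    isClosed_iInter fun _ => isClosed_eq (continuous_apply v) continuous_const)
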